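/- The number of leaves of the exponential of the game (n : {m : ()}) (the opponent game with n identical children, each a player game with m copies of the empty opponent game) is n!·m^n, for n, m ≥ 1. -/

import Mathlib

/-- Rose trees: the unlabeled shape of a game tree. -/
inductive RTree : Type where
  | node : List RTree → RTree

mutual
/-- An opponent game: a finite list of player games (its children). -/
inductive OGame : Type where
  | mk : List PGame → OGame
/-- A player game: a finite list of opponent games (its children). -/
inductive PGame : Type where
  | mk : List OGame → PGame
end

mutual
/-- The dual of an opponent game. -/
def OGame.dual : OGame → PGame
  | .mk ps => .mk (ps.attach.map fun ⟨p, _⟩ => p.dual)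
/-- The dual of a player game. -/
def PGame.dual : PGame → OGame
  | .mk os => .mk (os.attach.map fun ⟨o, _⟩ => o.dual)
end

mutual
/-- Strategy existence in an opponent game: a conjunction over children. -/
def OGame.strat : OGame → Bool
  | .mk ps => ps.attach.all fun ⟨p, _⟩ => p.strat
/-- Strategy existence in a player game: a disjunction over children. -/
def PGame.strat : PGame → Bool
  | .mk os => os.attach.any fun ⟨o, _⟩ => o.strat
end

mutual
/-- Tensor of opponent games: `O ⊗ O' = (P_i ⊗ˡ O', O ⊗ʳ P'_k | …)`. -/
def otimes : OGame → OGame → OGame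
  | .mk ps, .mk qs => .mk ((ps.attach.map fun ⟨p, _⟩ => oxl p (.mk qs)) ++
      (qs.attach.map fun ⟨q, _⟩ => oxr (.mk ps) q))
  termination_by o o' => sizeOf o + sizeOf o'
  decreasing_by
  · have := List.sizeOf_lt_of_mem ‹p ∈ ps›; simp_all; omega
  · have := List.sizeOf_lt_of_mem ‹q ∈ qs›; simp_all; omega
/-- Mixed tensor `O ⊗ʳ P = {O ⊗ O_j | j ∈ J}`. -/
def oxr : OGame → PGame → PGame
  | o, .mk os => .mk (os.attach.map fun ⟨oj, _⟩ => otimes o oj)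
  termination_by o p => sizeOf o + sizeOf p
  decreasing_by
  · have := List.sizeOf_lt_of_mem ‹oj ∈ os›; simp_all; omega
/-- Mixed tensor `P ⊗ˡ O = {O_j ⊗ O | j ∈ J}`. -/
def oxl : PGame → OGame → PGame
  | .mk os, o => .mk (os.attach.map fun ⟨oj, _⟩ => otimes oj o)
  termination_by p o => sizeOf p + sizeOf o
  decreasing_by
  · have := List.sizeOf_lt_of_mem ‹oj ∈ os›; simp_all; omega
end

mutual
/-- Par of player games: `P ⅋ P' = {O_j ⅋ˡ P', P ⅋ʳ O'_k | …}`. -/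
def parr : PGame → PGame → PGame
  | .mk os, .mk qs => .mk ((os.attach.map fun ⟨o, _⟩ => parrOP o (.mk qs)) ++
      (qs.attach.map fun ⟨q, _⟩ => parrPO (.mk os) q))
  termination_by p p' => sizeOf p + sizeOf p'
  decreasing_by
  · have := List.sizeOf_lt_of_mem ‹o ∈ os›; simp_all; omega
  · have := List.sizeOf_lt_of_mem ‹q ∈ qs›; simp_all; omega
/-- Mixed par `P ⅋ʳ O = (P ⅋ P_i | i ∈ I)`. -/
def parrPO : PGame → OGame → OGame
  | p, .mk ps => .mk (ps.attach.map fun ⟨pi, _⟩ => parr p pi)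
  termination_by p o => sizeOf p + sizeOf o
  decreasing_by
  · have := List.sizeOf_lt_of_mem ‹pi ∈ ps›; simp_all; omega
/-- Mixed par `O ⅋ˡ P = (P_i ⅋ P | i ∈ I)`. -/
def parrOP : OGame → PGame → OGame
  | .mk ps, p => .mk (ps.attach.map fun ⟨pi, _⟩ => parr pi p)
  termination_by o p => sizeOf o + sizeOf p
  decreasing_by
  · have := List.sizeOf_lt_of_mem ‹pi ∈ ps›; simp_all; omega
end

mutual
/-- The exponential `!O`: `!() = ()` and `!O = ⊗_{i∈I} (b_i : !'P_i)` for `I ≠ ∅`. -/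
def bang : OGame → OGame
  | .mk [] => .mk []
  | .mk (p :: ps) =>
      (ps.attach.map fun ⟨q, _⟩ => OGame.mk [bang' q]).foldl otimes (OGame.mk [bang' p])
/-- The auxiliary exponential `!'{a_j : O_j} = {a_j : !O_j}`. -/
def bang' : PGame → PGame
  | .mk os => .mk (os.attach.map fun ⟨o, _⟩ => bang o)
end

mutual
/-- Underlying unlabeled tree of an opponent game. -/
def OGame.toTree : OGame → RTree
  | .mk ps => .node (ps.attach.map fun ⟨p, _⟩ => p.toTree)
/-- Underlying unlabeled tree of a player game. -/
def PGame.toTree : PGame → RTree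
  | .mk os => .node (os.attach.map fun ⟨o, _⟩ => o.toTree)
end

/-- Number of nodes (including the root). -/
def RTree.nodes : RTree → ℕ
  | .node cs => 1 + (cs.attach.map fun ⟨c, _⟩ => c.nodes).sum

/-- Number of parent-child edges. -/
def RTree.edges : RTree → ℕ
  | .node cs => cs.length + (cs.attach.map fun ⟨c, _⟩ => c.edges).sum

/-- Number of leaves. -/
def RTree.leaves : RTree → ℕ
  | .node [] => 1
  | .node cs => (cs.attach.map fun ⟨c, _⟩ => c.leaves).sum

/-- Uniform size: `u[leaf] = 0`, `u[node with n children] = (n-1) + Σ u[child]`. -/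
def RTree.usize : RTree → ℕ
  | .node [] => 0
  | .node cs => (cs.length - 1) + (cs.attach.map fun ⟨c, _⟩ => c.usize).sum

/-- Depth: leaves have depth 0. -/
def RTree.depth : RTree → ℕ
  | .node cs => (cs.attach.map fun ⟨c, _⟩ => c.depth + 1).foldr max 0

/-- `profile t k` is the number of nodes of `t` at depth `k`. -/
def RTree.profile : RTree → ℕ → ℕ
  | _, 0 => 1
  | .node cs, k + 1 => (cs.attach.map fun ⟨c, _⟩ => c.profile k).sum

mutual
/-- Number of player nodes of an opponent game. -/
def OGame.pnodes : OGame → ℕ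
  | .mk ps => (ps.attach.map fun ⟨p, _⟩ => p.pnodes).sum
/-- Number of player nodes of a player game (the root counts). -/
def PGame.pnodes : PGame → ℕ
  | .mk os => 1 + (os.attach.map fun ⟨o, _⟩ => o.pnodes).sum
end

mutual
/-- Number of edges leaving opponent nodes, for an opponent game. -/
def OGame.eo : OGame → ℕ
  | .mk ps => ps.length + (ps.attach.map fun ⟨p, _⟩ => p.eo).sum
/-- Number of edges leaving opponent nodes, for a player game. -/
def PGame.eo : PGame → ℕ
  | .mk os => (os.attach.map fun ⟨o, _⟩ => o.eo).sum
end

mutual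
/-- Number of edges leaving player nodes, for an opponent game. -/
def OGame.ep : OGame → ℕ
  | .mk ps => (ps.attach.map fun ⟨p, _⟩ => p.ep).sum
/-- Number of edges leaving player nodes, for a player game. -/
def PGame.ep : PGame → ℕ
  | .mk os => os.length + (os.attach.map fun ⟨o, _⟩ => o.ep).sum
end

/-- `γ(i,j) = 1` if `i` or `j` is zero or even, else `0`. -/
def gammaCoef (i j : ℕ) : ℕ :=
  if i = 0 ∨ j = 0 ∨ i % 2 = 0 ∨ j % 2 = 0 then 1 else 0

mutual
/-- The single-branch player chain `L_n`. -/
def Lp : ℕ → PGame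
  | 0 => .mk []
  | n + 1 => .mk [Lo n]
/-- The single-branch opponent chain `L'_n`. -/
def Lo : ℕ → OGame
  | 0 => .mk []
  | n + 1 => .mk [Lp n]
end

/- ===== auxiliary development ===== -/

lemma OGame.sizeOf_lt_of_mem {p : PGame} {ps : List PGame} (h : p ∈ ps) :
    sizeOf p < sizeOf (OGame.mk ps) := by
  have := List.sizeOf_lt_of_mem h; simp; omega

lemma PGame.sizeOf_lt_of_mem {o : OGame} {os : List OGame} (h : o ∈ os) :
    sizeOf o < sizeOf (PGame.mk os) := by
  have := List.sizeOf_lt_of_mem h; simp; omega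

mutual
/-- leaves on opponent games -/
def OGame.lv : OGame → ℕ
  | .mk [] => 1
  | .mk ps => (ps.attach.map fun ⟨p, _⟩ => p.lv).sum
def PGame.lv : PGame → ℕ
  | .mk os => (os.attach.map fun ⟨o, _⟩ => o.lv).sum
end

lemma PGame.lv_mk (os : List OGame) :
    (PGame.mk os).lv = (os.map OGame.lv).sum := by
  rw [PGame.lv, List.attach_map_val]

lemma OGame.lv_nil : (OGame.mk []).lv = 1 := by rw [OGame.lv]

lemma OGame.lv_mk {ps : List PGame} (h : ps ≠ []) :
    (OGame.mk ps).lv = (ps.map PGame.lv).sum := by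
  cases ps with
  | nil => exact absurd rfl h
  | cons p ps =>
    rw [OGame.lv, List.attach_map_val]
    simp

lemma sum_attach_map {α : Type*} (l : List α) (f : {x // x ∈ l} → ℕ) (g : α → ℕ)
    (h : ∀ x (hx : x ∈ l), f ⟨x, hx⟩ = g x) :
    (l.attach.map f).sum = (l.map g).sum := by
  rw [← List.attach_map_val (l := l) (f := g)]
  congr 1
  exact List.map_congr_left fun x _ => by cases x with | mk x hx => exact h x hx

mutual
/-- uniform-depth predicate on opponent games: all leaves at depth 2a. -/
inductive UO : OGame → ℕ → Prop where
  | nil : UO (.mk []) 0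
  | cons {ps : List PGame} {a : ℕ} (hne : ps ≠ []) (h : ∀ p ∈ ps, UP p a) :
      UO (.mk ps) (a + 1)
/-- uniform-depth predicate on player games: all leaves at depth 2a+1. -/
inductive UP : PGame → ℕ → Prop where
  | mk {os : List OGame} {a : ℕ} (hne : os ≠ []) (h : ∀ o ∈ os, UO o a) :
      UP (.mk os) a
end
/-- The main tensor lemma, by strong induction on total size. -/
theorem key (N : ℕ) :
    (∀ (a b : ℕ) (o o' : OGame), sizeOf o + sizeOf o' ≤ N → UO o a → UO o' b →
      UO (otimes o o') (a + b) ∧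
        (otimes o o').lv = (a + b).choose a * (o.lv * o'.lv)) ∧
    (∀ (a b : ℕ) (o : OGame) (p : PGame), sizeOf o + sizeOf p ≤ N → UO o a → UP p b →
      UP (oxr o p) (a + b) ∧
        (oxr o p).lv = (a + b).choose a * (o.lv * p.lv)) ∧
    (∀ (a b : ℕ) (p : PGame) (o : OGame), sizeOf p + sizeOf o ≤ N → UP p a → UO o b →
      UP (oxl p o) (a + b) ∧
        (oxl p o).lv = (a + b).choose a * (p.lv * o.lv)) := by
  induction N using Nat.strong_induction_on with
  | _ N IH =>
  refine ⟨?_, ?_, ?_⟩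
  · -- otimes
    rintro a b ⟨ps⟩ ⟨qs⟩ hN h1 h2
    rw [otimes]
    cases h1 with
    | nil =>
      cases h2 with
      | nil =>
        simp only [List.attach_nil, List.map_nil, List.nil_append]
        exact ⟨UO.nil, by simp [OGame.lv_nil]⟩
      | cons hne2 hq =>
        rename_i b₁
        simp only [List.attach_nil, List.map_nil, List.nil_append]
        have keyB : ∀ q ∈ qs, UP (oxr (OGame.mk []) q) b₁ ∧
            (oxr (OGame.mk []) q).lv = q.lv := by
          intro q hq'
          have hlt : sizeOf (OGame.mk []) + sizeOf q < N :=
            lt_of_lt_of_le (by have := OGame.sizeOf_lt_of_mem hq'; omega) hN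
          obtain ⟨u1, u2⟩ := (IH _ hlt).2.1 0 b₁ (OGame.mk []) q le_rfl UO.nil (hq q hq')
          refine ⟨by simpa using u1, ?_⟩
          rw [u2]; simp [OGame.lv_nil]
        constructor
        · simp only [Nat.zero_add]
          refine UO.cons (by simpa using hne2) ?_
          intro x hx
          simp only [List.mem_map, List.mem_attach] at hx
          obtain ⟨⟨q, hq'⟩, -, rfl⟩ := hx
          exact (keyB q hq').1
        · rw [OGame.lv_mk (by simpa using hne2), List.map_map,
            sum_attach_map _ _ (fun q => PGame.lv q)
            (fun q hq' => by simp only [Function.comp_apply]; exact (keyB q hq').2),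
            ← OGame.lv_mk hne2]
          simp [OGame.lv_nil]
    | cons hne1 hp =>
      rename_i a₁
      cases h2 with
      | nil =>
        simp only [List.attach_nil, List.map_nil, List.append_nil]
        have keyA : ∀ p ∈ ps, UP (oxl p (OGame.mk [])) a₁ ∧
            (oxl p (OGame.mk [])).lv = p.lv := by
          intro p hp'
          have hlt : sizeOf p + sizeOf (OGame.mk []) < N :=
            lt_of_lt_of_le (by have := OGame.sizeOf_lt_of_mem hp'; omega) hN
          obtain ⟨u1, u2⟩ := (IH _ hlt).2.2 a₁ 0 p (OGame.mk []) le_rfl (hp p hp') UO.nil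
          refine ⟨by simpa using u1, ?_⟩
          rw [u2]; simp [OGame.lv_nil]
        constructor
        · simp only [Nat.add_zero]
          refine UO.cons (by simpa using hne1) ?_
          intro x hx
          simp only [List.mem_map, List.mem_attach] at hx
          obtain ⟨⟨p, hp'⟩, -, rfl⟩ := hx
          exact (keyA p hp').1
        · rw [OGame.lv_mk (by simpa using hne1), List.map_map,
            sum_attach_map _ _ (fun p => PGame.lv p)
            (fun p hp' => by simp only [Function.comp_apply]; exact (keyA p hp').2),
            ← OGame.lv_mk hne1]
          simp [OGame.lv_nil]
      | cons hne2 hq =>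
        rename_i b₁
        have keyA : ∀ p ∈ ps, UP (oxl p (OGame.mk qs)) (a₁ + (b₁ + 1)) ∧
            (oxl p (OGame.mk qs)).lv =
              (a₁ + (b₁ + 1)).choose a₁ * (p.lv * (OGame.mk qs).lv) := by
          intro p hp'
          have hlt : sizeOf p + sizeOf (OGame.mk qs) < N :=
            lt_of_lt_of_le (by have := OGame.sizeOf_lt_of_mem hp'; omega) hN
          exact (IH _ hlt).2.2 a₁ (b₁ + 1) p (OGame.mk qs) le_rfl (hp p hp')
            (UO.cons hne2 hq)
        have keyB : ∀ q ∈ qs, UP (oxr (OGame.mk ps) q) ((a₁ + 1) + b₁) ∧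
            (oxr (OGame.mk ps) q).lv =
              ((a₁ + 1) + b₁).choose (a₁ + 1) * ((OGame.mk ps).lv * q.lv) := by
          intro q hq'
          have hlt : sizeOf (OGame.mk ps) + sizeOf q < N :=
            lt_of_lt_of_le (by have := OGame.sizeOf_lt_of_mem hq'; omega) hN
          exact (IH _ hlt).2.1 (a₁ + 1) b₁ (OGame.mk ps) q le_rfl
            (UO.cons hne1 hp) (hq q hq')
        have edep : (a₁ + 1) + b₁ = a₁ + (b₁ + 1) := by omega
        constructor
        · rw [show (a₁ + 1) + (b₁ + 1) = (a₁ + (b₁ + 1)) + 1 from by omega]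
          refine UO.cons (by simp [hne1]) ?_
          intro x hx
          simp only [List.mem_append, List.mem_map, List.mem_attach] at hx
          rcases hx with ⟨⟨p, hp'⟩, -, rfl⟩ | ⟨⟨q, hq'⟩, -, rfl⟩
          · exact (keyA p hp').1
          · exact edep ▸ (keyB q hq').1
        · rw [OGame.lv_mk (by simp [hne1]), List.map_append, List.sum_append,
            List.map_map, List.map_map,
            sum_attach_map _ _
              (fun p => (a₁ + (b₁ + 1)).choose a₁ * (OGame.mk qs).lv * PGame.lv p)
              (fun p hp' => by simp only [Function.comp_apply]; rw [(keyA p hp').2]; ring),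
            sum_attach_map _ _
              (fun q => ((a₁ + 1) + b₁).choose (a₁ + 1) * (OGame.mk ps).lv * PGame.lv q)
              (fun q hq' => by simp only [Function.comp_apply]; rw [(keyB q hq').2]; ring),
            List.sum_map_mul_left, List.sum_map_mul_left,
            ← OGame.lv_mk hne1, ← OGame.lv_mk hne2]
          rw [show (a₁ + 1) + (b₁ + 1) = (a₁ + (b₁ + 1)) + 1 from by omega,
            Nat.choose_succ_succ, edep]
          ring
  · -- oxr
    rintro a b o ⟨os⟩ hN h1 h2
    obtain ⟨hne, hos⟩ : os ≠ [] ∧ ∀ x ∈ os, UO x b := by cases h2 with | mk hne h => exact ⟨hne, h⟩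
    rw [oxr]
    have key1 : ∀ oj ∈ os, UO (otimes o oj) (a + b) ∧
        (otimes o oj).lv = (a + b).choose a * (o.lv * oj.lv) := by
      intro oj hoj
      have hlt : sizeOf o + sizeOf oj < N :=
        lt_of_lt_of_le (by have := PGame.sizeOf_lt_of_mem hoj; omega) hN
      exact (IH _ hlt).1 a b o oj le_rfl h1 (hos oj hoj)
    constructor
    · refine UP.mk (by simpa using hne) ?_
      intro x hx
      simp only [List.mem_map, List.mem_attach] at hx
      obtain ⟨⟨oj, hoj⟩, -, rfl⟩ := hx
      exact (key1 oj hoj).1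
    · rw [PGame.lv_mk, List.map_map,
        sum_attach_map _ _ (fun oj => (a + b).choose a * o.lv * OGame.lv oj)
        (fun oj hoj => by simp only [Function.comp_apply]; rw [(key1 oj hoj).2]; ring),
        List.sum_map_mul_left, PGame.lv_mk]
      ring
  · -- oxl
    rintro a b ⟨os⟩ o hN h1 h2
    obtain ⟨hne, hos⟩ : os ≠ [] ∧ ∀ x ∈ os, UO x a := by cases h1 with | mk hne h => exact ⟨hne, h⟩
    rw [oxl]
    have key1 : ∀ oj ∈ os, UO (otimes oj o) (a + b) ∧
        (otimes oj o).lv = (a + b).choose a * (oj.lv * o.lv) := by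
      intro oj hoj
      have hlt : sizeOf oj + sizeOf o < N :=
        lt_of_lt_of_le (by have := PGame.sizeOf_lt_of_mem hoj; omega) hN
      exact (IH _ hlt).1 a b oj o le_rfl (hos oj hoj) h2
    constructor
    · refine UP.mk (by simpa using hne) ?_
      intro x hx
      simp only [List.mem_map, List.mem_attach] at hx
      obtain ⟨⟨oj, hoj⟩, -, rfl⟩ := hx
      exact (key1 oj hoj).1
    · rw [PGame.lv_mk, List.map_map,
        sum_attach_map _ _ (fun oj => (a + b).choose a * o.lv * OGame.lv oj)
        (fun oj hoj => by simp only [Function.comp_apply]; rw [(key1 oj hoj).2]; ring),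
        List.sum_map_mul_left, PGame.lv_mk]
      ring
/-- leaves of the underlying tree equals lv, for uniform games. -/
theorem leaves_eq (N : ℕ) :
    (∀ (o : OGame) (a : ℕ), sizeOf o ≤ N → UO o a → o.toTree.leaves = o.lv) ∧
    (∀ (p : PGame) (a : ℕ), sizeOf p ≤ N → UP p a → p.toTree.leaves = p.lv) := by
  induction N using Nat.strong_induction_on with
  | _ N IH =>
  constructor
  · rintro ⟨ps⟩ a hN h
    cases h with
    | nil => simp [OGame.toTree, RTree.leaves, OGame.lv_nil]
    | cons hne hp =>
      rename_i a₁
      rw [OGame.toTree, RTree.leaves,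
        sum_attach_map _ _ RTree.leaves (fun c hc => rfl), List.map_map,
        sum_attach_map _ _ (fun q => PGame.lv q)
          (fun q hq => by
            simp only [Function.comp_apply]
            have hlt : sizeOf q < N :=
              lt_of_lt_of_le (OGame.sizeOf_lt_of_mem hq) hN
            exact (IH _ hlt).2 q a₁ le_rfl (hp q hq)),
        ← OGame.lv_mk hne]
      intro hemp
      exact hne (by simpa using hemp)
  · rintro ⟨os⟩ a hN h
    cases h with
    | mk hne hos =>
      rw [PGame.toTree, RTree.leaves,
        sum_attach_map _ _ RTree.leaves (fun c hc => rfl), List.map_map,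
        sum_attach_map _ _ (fun q => OGame.lv q)
          (fun q hq => by
            simp only [Function.comp_apply]
            have hlt : sizeOf q < N :=
              lt_of_lt_of_le (PGame.sizeOf_lt_of_mem hq) hN
            exact (IH _ hlt).1 q a le_rfl (hos q hq)),
        ← PGame.lv_mk]
      intro hemp
      exact hne (by simpa using hemp)
lemma fold_key (g : OGame) (m : ℕ) (hg : UO g 1) (hlv : g.lv = m) :
    ∀ (k : ℕ) (o : OGame) (a : ℕ), UO o a →
      UO (List.foldl otimes o (List.replicate k g)) (a + k) ∧
      (List.foldl otimes o (List.replicate k g)).lv * a.factorial =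
        o.lv * m ^ k * (a + k).factorial := by
  intro k
  induction k with
  | zero => intro o a h; refine ⟨by simpa using h, by simp⟩
  | succ k ihk =>
    intro o a h
    have hK := (key (sizeOf o + sizeOf g)).1 a 1 o g le_rfl h hg
    rw [List.replicate_succ, List.foldl_cons]
    obtain ⟨u1, u2⟩ := ihk (otimes o g) (a + 1) hK.1
    set F := List.foldl otimes (otimes o g) (List.replicate k g) with hF
    refine ⟨by rw [show a + (k + 1) = a + 1 + k from by omega]; exact u1, ?_⟩
    refine Nat.eq_of_mul_eq_mul_left (Nat.succ_pos a) ?_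
    calc (a + 1) * (F.lv * a.factorial) = F.lv * (a + 1).factorial := by
          rw [Nat.factorial_succ]; ring
      _ = (otimes o g).lv * m ^ k * (a + 1 + k).factorial := u2
      _ = (a + 1) * (o.lv * m ^ (k + 1) * (a + (k + 1)).factorial) := by
          rw [hK.2, Nat.choose_succ_self_right, hlv,
            show a + 1 + k = a + (k + 1) from by omega]
          ring

lemma bang_E : bang (OGame.mk []) = OGame.mk [] := by rw [bang]

lemma bang'_P (m : ℕ) :
    bang' (PGame.mk (List.replicate m (OGame.mk []))) =
      PGame.mk (List.replicate m (OGame.mk [])) := by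
  rw [bang']
  congr 1
  calc (List.replicate m (OGame.mk [])).attach.map (fun o => bang o.1)
      = (List.replicate m (OGame.mk [])).map bang := List.attach_map_val
    _ = List.replicate m (bang (OGame.mk [])) := by rw [List.map_replicate]
    _ = List.replicate m (OGame.mk []) := by rw [bang_E]

lemma bang_rep (k m : ℕ) :
    bang (OGame.mk (List.replicate (k + 1) (PGame.mk (List.replicate m (OGame.mk []))))) =
      List.foldl otimes (OGame.mk [PGame.mk (List.replicate m (OGame.mk []))])
        (List.replicate k (OGame.mk [PGame.mk (List.replicate m (OGame.mk []))])) := by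
  rw [List.replicate_succ, bang]
  congr 1
  · rw [bang'_P]
  · calc (List.replicate k (PGame.mk (List.replicate m (OGame.mk [])))).attach.map
          (fun q => OGame.mk [bang' q.1])
        = (List.replicate k (PGame.mk (List.replicate m (OGame.mk [])))).map
            (fun q => OGame.mk [bang' q]) := List.attach_map_val (f := fun q => OGame.mk [bang' q])
      _ = List.replicate k (OGame.mk [bang' (PGame.mk (List.replicate m (OGame.mk [])))]) :=
          by rw [List.map_replicate]
      _ = _ := by rw [bang'_P]
/-- leaves[!(n : {m : ()})] = n! · mⁿ for n, m ≥ 1. -/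
theorem leaves_bang_rep (n m : ℕ) (hn : 1 ≤ n) (hm : 1 ≤ m) :
    (bang (OGame.mk (List.replicate n
        (PGame.mk (List.replicate m (OGame.mk [])))))).toTree.leaves =
      Nat.factorial n * m ^ n := by
  obtain ⟨k, rfl⟩ : ∃ k, n = k + 1 := ⟨n - 1, by omega⟩
  have hUOg : UO (OGame.mk [PGame.mk (List.replicate m (OGame.mk []))]) 1 := by
    refine UO.cons (by simp) ?_
    intro p hp
    simp only [List.mem_singleton] at hp
    subst hp
    refine UP.mk ?_ ?_
    · intro hcon
      have := congrArg List.length hcon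
      simp at this
      omega
    · intro o ho
      rw [List.eq_of_mem_replicate ho]
      exact UO.nil
  have hlvg : (OGame.mk [PGame.mk (List.replicate m (OGame.mk []))]).lv = m := by
    rw [OGame.lv_mk (by simp), List.map_singleton, List.sum_singleton,
      PGame.lv_mk, List.map_replicate, OGame.lv_nil, List.sum_replicate,
      smul_eq_mul, mul_one]
  rw [bang_rep k m]
  obtain ⟨hU, hL⟩ := fold_key _ m hUOg hlvg k _ 1 hUOg
  rw [(leaves_eq _).1 _ (1 + k) le_rfl hU]
  rw [hlvg, Nat.factorial_one, mul_one] at hL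
  rw [hL, show 1 + k = k + 1 from by omega, Nat.factorial_succ]
  ring
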